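/- arXiv:2602.16857 — 2 statements merged into one kernel-verified Lean document; each statement's English description precedes it below -/
import Mathlib

section
/- Let D ≥ 2, x : Fin D → ℝ, x̄ = (∑ x_j)/D, and W_d(ε) = exp(-x_d/ε) / ∑_j exp(-x_j/ε). Then for each d, ε · (W_d(ε) - 1/D) tends to (x̄ - x_d)/D as ε → ∞. -/
open Filter Topology

lemma aux_exp_limit (c : ℝ) :
    Tendsto (fun ε : ℝ => ε * (Real.exp (c / ε) - 1)) atTop (𝓝 c) := by
  rcases eq_or_ne c 0 with hc | hc
  · simp [hc]
  · have h0 : Tendsto (fun ε : ℝ => c / ε) atTop (𝓝[≠] (0 : ℝ)) := by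
      apply tendsto_nhdsWithin_of_tendsto_nhds_of_eventually_within
      · exact tendsto_const_nhds.div_atTop tendsto_id
      · filter_upwards [eventually_gt_atTop (0 : ℝ)] with ε hε
        exact div_ne_zero hc (ne_of_gt hε)
    have hslope : Tendsto (fun y : ℝ => (Real.exp y - 1) / y) (𝓝[≠] (0 : ℝ)) (𝓝 1) := by
      have h := hasDerivAt_iff_tendsto_slope.mp (Real.hasDerivAt_exp 0)
      simp only [Real.exp_zero] at h
      refine h.congr (fun y => ?_)
      simp [slope_def_field]
    have hcomp := (hslope.comp h0).const_mul c
    rw [mul_one] at hcomp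
    apply hcomp.congr'
    filter_upwards [eventually_gt_atTop (0 : ℝ)] with ε hε
    have hε' : ε ≠ 0 := ne_of_gt hε
    simp only [Function.comp_apply]
    field_simp

theorem softmax_first_order (D : ℕ) (hD : 2 ≤ D) (x : Fin D → ℝ)
    (xbar : ℝ) (hxbar : xbar = (∑ j, x j) / D)
    (W : Fin D → ℝ → ℝ)
    (hW : ∀ d ε, W d ε = Real.exp (-x d / ε) / ∑ j, Real.exp (-x j / ε))
    (d : Fin D) :
    Tendsto (fun ε => ε * (W d ε - 1 / D)) atTop (𝓝 ((xbar - x d) / D)) := by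
  have hD0 : (0 : ℝ) < D := by
    have : (0 : ℕ) < D := by omega
    exact_mod_cast this
  set S : ℝ → ℝ := fun ε => ∑ j, Real.exp (-x j / ε) with hS
  have hSpos : ∀ ε, 0 < S ε :=
    fun ε => Finset.sum_pos (fun j _ => Real.exp_pos _) ⟨d, Finset.mem_univ d⟩
  have hStend : Tendsto S atTop (𝓝 (D : ℝ)) := by
    have h1 : Tendsto S atTop (𝓝 (∑ _j : Fin D, (1 : ℝ))) := by
      apply tendsto_finset_sum
      intro j _
      have h2 : Tendsto (fun ε : ℝ => -x j / ε) atTop (𝓝 0) :=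
        tendsto_const_nhds.div_atTop tendsto_id
      simpa [Function.comp_def] using (Real.continuous_exp.tendsto 0).comp h2
    simpa using h1
  have hnum : Tendsto
      (fun ε : ℝ => ∑ j, (ε * (Real.exp (-x d / ε) - 1) - ε * (Real.exp (-x j / ε) - 1)))
      atTop (𝓝 (∑ j, (x j - x d))) := by
    apply tendsto_finset_sum
    intro j _
    have h1 := aux_exp_limit (-x d)
    have h2 := aux_exp_limit (-x j)
    have := h1.sub h2
    convert this using 2
    ring
  have hden : Tendsto (fun ε : ℝ => (D : ℝ) * S ε) atTop (𝓝 ((D : ℝ) * D)) :=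
    tendsto_const_nhds.mul hStend
  have hlim := hnum.div hden (by positivity)
  have heq : (∑ j, (x j - x d)) / ((D : ℝ) * D) = (xbar - x d) / D := by
    subst hxbar
    have hsum : ∑ j, (x j - x d) = (∑ j, x j) - D * x d := by
      rw [Finset.sum_sub_distrib]
      simp [mul_comm]
    rw [hsum]
    field_simp
  rw [← heq]
  apply hlim.congr
  intro ε
  have hS' := (hSpos ε).ne'
  have hterm : ∀ j : Fin D, ε * (Real.exp (-x d / ε) - 1) - ε * (Real.exp (-x j / ε) - 1)
      = ε * Real.exp (-x d / ε) - ε * Real.exp (-x j / ε) := fun j => by ring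
  have hnumeq : (∑ j, (ε * (Real.exp (-x d / ε) - 1) - ε * (Real.exp (-x j / ε) - 1)))
      = (D : ℝ) * (ε * Real.exp (-x d / ε)) - ε * S ε := by
    simp only [hterm]
    rw [Finset.sum_sub_distrib, Finset.sum_const, ← Finset.mul_sum]
    simp [hS, nsmul_eq_mul]
  simp only [Pi.div_apply]
  rw [hnumeq, hW]
  rw [hS] at hS' ⊢
  beta_reduce at hS' ⊢
  generalize (∑ j, Real.exp (-x j / ε)) = T at hS' ⊢
  field_simp
end

section
/- Let D ≥ 2, x : Fin D → ℝ with x̄ = (∑ x_j)/D, and suppose x_d ≠ x̄ for a given index d. With W_d(ε) = exp(-x_d/ε)/∑_j exp(-x_j/ε), the indicator 1{W_d(ε) > 1/D} equals 1{x_d < x̄} for all sufficiently large ε. -/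
open Filter Topology

theorem softmax_indicator_eventually (D : ℕ) (hD : 2 ≤ D) (x : Fin D → ℝ)
    (xbar : ℝ) (hxbar : xbar = (∑ j, x j) / D)
    (W : Fin D → ℝ → ℝ)
    (hW : ∀ d ε, W d ε = Real.exp (-x d / ε) / ∑ j, Real.exp (-x j / ε))
    (d : Fin D) (hne : x d ≠ xbar) :
    ∀ᶠ ε in atTop, (if W d ε > 1 / D then (1 : ℝ) else 0) =
      (if x d < xbar then (1 : ℝ) else 0) := by
  have hD0 : (0:ℝ) < (D:ℝ) := by
    have : (2:ℝ) ≤ (D:ℝ) := by exact_mod_cast hD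
    linarith
  set c : ℝ := ∑ j, (x j - x d) with hc
  have hcval : c = (∑ j, x j) - D * x d := by
    simp [hc, Finset.sum_sub_distrib, mul_comm]
  set F : ℝ → ℝ := fun t => ∑ j, (Real.exp (-x d * t) - Real.exp (-x j * t)) with hFdef
  have hexp : ∀ a : ℝ, HasDerivAt (fun t : ℝ => Real.exp (-a * t)) (-a) 0 := by
    intro a
    have h := ((hasDerivAt_id (0:ℝ)).const_mul (-a)).exp
    simpa using h
  have hF : HasDerivAt F c 0 := by
    have h := HasDerivAt.fun_sum (u := Finset.univ)
      (fun j (_ : j ∈ Finset.univ) => ((hexp (x d)).sub (hexp (x j))))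
    have heq : ∑ j : Fin D, (x j - x d) = ∑ j : Fin D, (-x d - -x j) :=
      Finset.sum_congr rfl (fun j _ => by ring)
    rw [hc, heq]
    exact h
  have hF0 : F 0 = 0 := by simp [hFdef]
  rw [hasDerivAt_iff_tendsto_slope] at hF
  have hslope : Tendsto (fun t => F t / t) (𝓝[>] (0:ℝ)) (𝓝 c) := by
    have hmono : Tendsto (slope F 0) (𝓝[>] (0:ℝ)) (𝓝 c) :=
      hF.mono_left (nhdsWithin_mono _ (fun t ht => ne_of_gt ht))
    refine hmono.congr (fun t => ?_)
    simp [slope_def_field, hF0, div_eq_mul_inv, mul_comm]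
  -- key equivalence for positive ε
  have hkey : ∀ ε : ℝ, 0 < ε → (W d ε > 1 / D ↔ 0 < F ε⁻¹) := by
    intro ε hε
    have hS : 0 < ∑ j, Real.exp (-x j / ε) := by
      apply Finset.sum_pos (fun j _ => Real.exp_pos _)
      exact ⟨d, Finset.mem_univ d⟩
    have hFeq : F ε⁻¹ = D * Real.exp (-x d / ε) - ∑ j, Real.exp (-x j / ε) := by
      simp [hFdef, Finset.sum_sub_distrib, div_eq_mul_inv, mul_comm]
    rw [hW, hFeq, gt_iff_lt, div_lt_div_iff₀ hD0 hS]
    constructor <;> intro h <;> nlinarith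
  have hεpos : ∀ᶠ ε : ℝ in atTop, 0 < ε := eventually_gt_atTop 0
  have hinv : Tendsto (fun ε : ℝ => ε⁻¹) atTop (𝓝[>] (0:ℝ)) :=
    tendsto_inv_atTop_nhdsGT_zero
  have hsign : x d < xbar ↔ 0 < c := by
    rw [hxbar, lt_div_iff₀ hD0, hcval]
    constructor <;> intro h <;> nlinarith
  rcases lt_or_gt_of_ne hne with hlt | hgt
  · -- c > 0 : eventually F(ε⁻¹) > 0
    have hcpos : 0 < c := hsign.mp hlt
    have h1 : ∀ᶠ t in 𝓝[>] (0:ℝ), 0 < F t / t :=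
      hslope.eventually (eventually_gt_nhds hcpos)
    have h2 : ∀ᶠ t in 𝓝[>] (0:ℝ), 0 < F t := by
      filter_upwards [h1, self_mem_nhdsWithin] with t h ht
      have ht0 : 0 < t := ht
      exact (div_pos_iff.mp h).resolve_right (fun ⟨_, h2⟩ => absurd ht0 (not_lt.mpr h2.le)) |>.1
    have h3 : ∀ᶠ ε : ℝ in atTop, 0 < F ε⁻¹ := hinv.eventually h2
    filter_upwards [h3, hεpos] with ε h3 hε
    rw [if_pos ((hkey ε hε).mpr h3), if_pos hlt]
  · -- c < 0 : eventually F(ε⁻¹) < 0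
    have hcneg : c < 0 := by
      by_contra h
      rcases lt_or_eq_of_le (not_lt.mp h) with h' | h'
      · exact absurd (hsign.mpr h') (not_lt.mpr hgt.le)
      · have : x d = xbar := by
          rw [hxbar, eq_div_iff (ne_of_gt hD0)]
          nlinarith [hcval, h'.symm]
        exact hne this
    have h1 : ∀ᶠ t in 𝓝[>] (0:ℝ), F t / t < 0 :=
      hslope.eventually (eventually_lt_nhds hcneg)
    have h2 : ∀ᶠ t in 𝓝[>] (0:ℝ), F t < 0 := by
      filter_upwards [h1, self_mem_nhdsWithin] with t h ht
      have ht0 : (0:ℝ) < t := ht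
      nlinarith [div_lt_iff₀ ht0 |>.mp h]
    have h3 : ∀ᶠ ε : ℝ in atTop, F ε⁻¹ < 0 := hinv.eventually h2
    filter_upwards [h3, hεpos] with ε h3 hε
    have : ¬ (W d ε > 1 / D) := fun h => absurd ((hkey ε hε).mp h) (not_lt.mpr h3.le)
    rw [if_neg this, if_neg (not_lt.mpr hgt.le)]
end
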